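/- For every q with 0 < q < 1, the function x ↦ x·ψ'_q(x) is strictly decreasing on (0, ∞). -/

import Mathlib

open Real

/-- The `q`-digamma function `ψ_q(x)`. For `0 < q < 1`,
`ψ_q(x) = -log(1-q) + (log q) ∑_{n≥1} q^{n x}/(1-q^n)`; for `q > 1`,
`ψ_q(x) = -log(q-1) + (log q)(x - 1/2 - ∑_{n≥1} q^{-n x}/(1-q^{-n}))`;
for `q = 1` it is the classical digamma function `(log ∘ Γ)'`. -/
noncomputable def qDigamma (q x : ℝ) : ℝ :=
  if q < 1 then
    -Real.log (1 - q) +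
      Real.log q * ∑' n : ℕ, q ^ (((n : ℝ) + 1) * x) / (1 - q ^ ((n : ℝ) + 1))
  else if 1 < q then
    -Real.log (q - 1) +
      Real.log q *
        (x - 1 / 2 - ∑' n : ℕ, q ^ (-(((n : ℝ) + 1) * x)) / (1 - q ^ (-((n : ℝ) + 1))))
  else
    deriv (fun y : ℝ => Real.log (Real.Gamma y)) x

lemma aux_sum1 (k : ℕ) {s : ℝ} (h0 : 0 ≤ s) (h1 : s < 1) :
    Summable (fun n : ℕ => ((n:ℝ)+1)^k * s^(n+1)) := by
  have h := summable_pow_mul_geometric_of_norm_lt_one (R := ℝ) k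
    (r := s) (by rwa [Real.norm_eq_abs, abs_of_nonneg h0])
  have h2 := (summable_nat_add_iff 1).2 h
  refine h2.congr fun n => ?_
  push_cast
  ring

lemma aux_sumb (b : ℕ → ℝ) {C : ℝ} (k : ℕ) (hb : ∀ n, |b n| ≤ C * ((n:ℝ)+1)^k)
    {s : ℝ} (h0 : 0 ≤ s) (h1 : s < 1) : Summable (fun n : ℕ => b n * s^(n+1)) := by
  refine Summable.of_norm_bounded ((aux_sum1 k h0 h1).mul_left C) fun n => ?_
  rw [Real.norm_eq_abs, abs_mul, abs_of_nonneg (pow_nonneg h0 _)]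
  calc |b n| * s^(n+1) ≤ (C * ((n:ℝ)+1)^k) * s^(n+1) := by
        exact mul_le_mul_of_nonneg_right (hb n) (pow_nonneg h0 _)
    _ = C * (((n:ℝ)+1)^k * s^(n+1)) := by ring

lemma aux_expL (q : ℝ) (n : ℕ) (x : ℝ) :
    Real.exp ((((n:ℝ)+1) * Real.log q) * x) = (Real.exp (Real.log q * x))^(n+1) := by
  rw [← Real.exp_nat_mul]
  congr 1
  push_cast
  ring

lemma aux_deriv {q : ℝ} (hq0 : 0 < q) (hq1 : q < 1) (b : ℕ → ℝ) {C : ℝ} (k : ℕ)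
    (hb : ∀ n, |b n| ≤ C * ((n:ℝ)+1)^k) {x : ℝ} (hx : 0 < x) :
    HasDerivAt (fun y => ∑' n : ℕ, b n * Real.exp ((((n:ℝ)+1) * Real.log q) * y))
      (∑' n : ℕ, (b n * (((n:ℝ)+1) * Real.log q)) *
        Real.exp ((((n:ℝ)+1) * Real.log q) * x)) x := by
  have hlog : Real.log q < 0 := Real.log_neg hq0 hq1
  set s : ℝ := Real.exp (Real.log q * (x/2)) with hs
  have hs0 : 0 < s := Real.exp_pos _
  have hs1 : s < 1 := Real.exp_lt_one_iff.mpr (by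
    have := mul_pos (neg_pos.mpr hlog) (half_pos hx)
    nlinarith)
  have hCnn : 0 ≤ C := by
    have := hb 0
    have h0 : (0:ℝ) ≤ |b 0| := abs_nonneg _
    have h1 : (0:ℝ) ≤ C * ((0:ℝ)+1)^k := le_trans h0 (by simpa using this)
    simpa using h1
  -- the bound sequence
  set u : ℕ → ℝ := fun n => (C * (-Real.log q)) * (((n:ℝ)+1)^(k+1) * s^(n+1)) with hu
  have hu_sum : Summable u := (aux_sum1 (k+1) hs0.le hs1).mul_left _
  have key := hasDerivAt_tsum_of_isPreconnected hu_sum (isOpen_Ioi (a := x/2))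
    (convex_Ioi (x/2)).isPreconnected
    (g := fun n y => b n * Real.exp ((((n:ℝ)+1) * Real.log q) * y))
    (g' := fun n y => (b n * (((n:ℝ)+1) * Real.log q)) *
      Real.exp ((((n:ℝ)+1) * Real.log q) * y))
    (y₀ := x) (y := x) ?_ ?_ ?_ ?_ ?_
  · exact key
  · -- HasDerivAt of each term
    intro n y _
    have h1 : HasDerivAt (fun z : ℝ => (((n:ℝ)+1) * Real.log q) * z)
        (((n:ℝ)+1) * Real.log q) y := by
      simpa using (hasDerivAt_id y).const_mul ((((n:ℝ)+1) * Real.log q))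
    have h2 := h1.exp
    have h3 := h2.const_mul (b n)
    exact h3.congr_deriv (by ring)
  · -- bound
    intro n y hy
    have hy' : x/2 < y := hy
    rw [Real.norm_eq_abs, abs_mul, abs_mul, abs_mul,
      Real.abs_exp]
    have hexp : Real.exp ((((n:ℝ)+1) * Real.log q) * y) ≤ s^(n+1) := by
      rw [← aux_expL q n (x/2)]
      apply Real.exp_le_exp.mpr
      have hn1 : (0:ℝ) < (n:ℝ)+1 := by positivity
      have : Real.log q * y ≤ Real.log q * (x/2) := by nlinarith
      nlinarith
    have habs : |((n:ℝ)+1)| = (n:ℝ)+1 := abs_of_nonneg (by positivity)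
    have hlq : |Real.log q| = -Real.log q := abs_of_neg hlog
    rw [habs, hlq]
    have h1 : |b n| * (((n:ℝ)+1) * -Real.log q) * Real.exp ((((n:ℝ)+1) * Real.log q) * y)
        ≤ |b n| * (((n:ℝ)+1) * -Real.log q) * s^(n+1) := by
      apply mul_le_mul_of_nonneg_left hexp
      have hc0 : (0:ℝ) ≤ -Real.log q := by linarith
      positivity
    refine h1.trans ?_
    have h2 : |b n| ≤ C * ((n:ℝ)+1)^k := hb n
    have hsp : (0:ℝ) ≤ s^(n+1) := by positivity
    have hn1 : (0:ℝ) ≤ (n:ℝ)+1 := by positivity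
    have hc : (0:ℝ) ≤ -Real.log q := by linarith
    calc |b n| * (((n:ℝ)+1) * -Real.log q) * s^(n+1)
        ≤ (C * ((n:ℝ)+1)^k) * (((n:ℝ)+1) * -Real.log q) * s^(n+1) := by
          apply mul_le_mul_of_nonneg_right _ hsp
          apply mul_le_mul_of_nonneg_right h2
          positivity
      _ = (C * (-Real.log q)) * (((n:ℝ)+1)^(k+1) * s^(n+1)) := by ring
  · exact half_lt_self hx
  · -- summability at x
    have hx1 : Real.exp (Real.log q * x) < 1 := Real.exp_lt_one_iff.mpr (by nlinarith)
    have hx0 : (0:ℝ) ≤ Real.exp (Real.log q * x) := (Real.exp_pos _).le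
    have := aux_sumb b k hb hx0 hx1
    refine this.congr fun n => ?_
    rw [aux_expL q n x]
  · exact half_lt_self hx

lemma aux_geom {q : ℝ} (m : ℕ) : (1:ℝ) - q^m = (1-q) * ∑ r ∈ Finset.range m, q^r := by
  have h := geom_sum_mul (q:ℝ) m
  linear_combination h

lemma aux_mono {q : ℝ} (hq0 : 0 < q) (hq1 : q < 1) {i j : ℕ} (hi : 1 ≤ i) (hij : i ≤ j) :
    (i:ℝ)/(1 - q^i) ≤ (j:ℝ)/(1 - q^j) := by
  have hqi : q^i < 1 := pow_lt_one₀ hq0.le hq1 (by omega)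
  have hqj : q^j < 1 := pow_lt_one₀ hq0.le hq1 (by omega)
  rw [div_le_div_iff₀ (by linarith) (by linarith)]
  rw [aux_geom i, aux_geom j]
  have hq' : (0:ℝ) < 1 - q := by linarith
  have key : (i:ℝ) * ∑ r ∈ Finset.range j, q^r ≤ (j:ℝ) * ∑ r ∈ Finset.range i, q^r := by
    have hsplit : ∑ r ∈ Finset.range j, (q:ℝ)^r
        = (∑ r ∈ Finset.range i, q^r) + ∑ r ∈ Finset.Ico i j, q^r := by
      rw [Finset.range_eq_Ico, Finset.range_eq_Ico]
      exact (Finset.sum_Ico_consecutive (fun r => (q:ℝ)^r) (Nat.zero_le i) hij).symm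
    have hb1 : ∑ r ∈ Finset.Ico i j, (q:ℝ)^r ≤ ((j:ℝ) - i) * q^i := by
      have := Finset.sum_le_card_nsmul (Finset.Ico i j) (fun r => (q:ℝ)^r) (q^i)
        (fun r hr => pow_le_pow_of_le_one hq0.le hq1.le (Finset.mem_Ico.mp hr).1)
      rw [Nat.card_Ico, nsmul_eq_mul] at this
      refine this.trans_eq ?_
      congr 1
      push_cast [Nat.cast_sub hij]
      ring
    have hb2 : (i:ℝ) * q^i ≤ ∑ r ∈ Finset.range i, (q:ℝ)^r := by
      have := Finset.card_nsmul_le_sum (Finset.range i) (fun r => (q:ℝ)^r) (q^i)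
        (fun r hr => pow_le_pow_of_le_one hq0.le hq1.le
          (by simpa using (Finset.mem_range.mp hr).le))
      rwa [Finset.card_range, nsmul_eq_mul] at this
    have hji : (0:ℝ) ≤ (j:ℝ) - i := by
      have : (i:ℝ) ≤ j := by exact_mod_cast hij
      linarith
    have hi' : (0:ℝ) ≤ (i:ℝ) := by positivity
    calc (i:ℝ) * ∑ r ∈ Finset.range j, q^r
        = (i:ℝ) * ∑ r ∈ Finset.range i, q^r + (i:ℝ) * ∑ r ∈ Finset.Ico i j, q^r := by
          rw [hsplit]; ring
      _ ≤ (i:ℝ) * ∑ r ∈ Finset.range i, q^r + (i:ℝ) * (((j:ℝ) - i) * q^i) := by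
          nlinarith [hb1]
      _ = (i:ℝ) * ∑ r ∈ Finset.range i, q^r + ((j:ℝ) - i) * ((i:ℝ) * q^i) := by ring
      _ ≤ (i:ℝ) * ∑ r ∈ Finset.range i, q^r + ((j:ℝ) - i) * ∑ r ∈ Finset.range i, q^r := by
          nlinarith [hb2]
      _ = (j:ℝ) * ∑ r ∈ Finset.range i, q^r := by ring
  calc (i:ℝ) * ((1-q) * ∑ r ∈ Finset.range j, q^r)
      = (1-q) * ((i:ℝ) * ∑ r ∈ Finset.range j, q^r) := by ring
    _ ≤ (1-q) * ((j:ℝ) * ∑ r ∈ Finset.range i, q^r) := by nlinarith [key]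
    _ = (j:ℝ) * ((1-q) * ∑ r ∈ Finset.range i, q^r) := by ring

lemma aux_pos {q : ℝ} (hq0 : 0 < q) (hq1 : q < 1) {u : ℝ} (hu : 0 < u) :
    0 < ∑' n : ℕ, (((n:ℝ)+1)/(1 - q^(n+1))) *
      ((((n:ℝ)+1)*u - 1) * (Real.exp (-u))^(n+1)) := by
  set t : ℝ := Real.exp (-u) with ht
  have ht0 : 0 < t := Real.exp_pos _
  have ht1 : t < 1 := Real.exp_lt_one_iff.mpr (by linarith)
  have h1t : 0 < 1 - t := by linarith
  have hq1' : 0 < 1 - q := by linarith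
  have hden : ∀ m : ℕ, 1 ≤ m → (0:ℝ) < 1 - q^m := fun m hm => by
    have : q^m < 1 := pow_lt_one₀ hq0.le hq1 (by omega)
    linarith
  set μ : ℕ → ℝ := fun n => ((n:ℝ)+1)/(1 - q^(n+1)) with hμ
  set g : ℕ → ℝ := fun n => (((n:ℝ)+1)*u - 1) * t^(n+1) with hg
  have hμb : ∀ n, μ n ≤ (1/(1-q)) * (((n:ℝ)+1)) := by
    intro n
    have h1 : 1 - q ≤ 1 - q^(n+1) := by
      have : q^(n+1) ≤ q := by
        calc q^(n+1) ≤ q^1 := pow_le_pow_of_le_one hq0.le hq1.le (by omega)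
        _ = q := pow_one q
      linarith
    rw [hμ, show (1/(1-q))*((n:ℝ)+1) = ((n:ℝ)+1)/(1-q) by ring]
    rw [div_le_div_iff_of_pos_left (by positivity) (hden _ (by omega)) hq1']
    exact h1
  have hμ0 : ∀ n, 0 ≤ μ n := fun n => by
    have := hden (n+1) (by omega)
    rw [hμ]
    positivity
  -- pivot
  set N : ℕ := ⌈1/u⌉₊ with hN
  have hN1 : 1 ≤ N := by
    rw [hN]
    have : 0 < ⌈1/u⌉₊ := Nat.ceil_pos.mpr (by positivity)
    omega
  set W : ℝ := (N:ℝ)/(1 - q^N) with hW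
  have hW0 : 0 < W := by
    rw [hW]
    apply div_pos (by exact_mod_cast Nat.pos_of_ne_zero (by omega)) (hden N hN1)
  have hterm : ∀ n, W * g n ≤ μ n * g n := by
    intro n
    rcases le_or_gt 1 (((n:ℝ)+1)*u) with h | h
    · have hg0 : 0 ≤ g n := mul_nonneg (by linarith) (by positivity)
      have hNle : N ≤ n+1 := by
        rw [hN]
        apply Nat.ceil_le.mpr
        rw [div_le_iff₀ hu]
        push_cast
        linarith
      have : W ≤ μ n := by
        rw [hW, hμ]
        have := aux_mono hq0 hq1 hN1 hNle
        push_cast at this ⊢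
        convert this using 3 <;> push_cast <;> ring
      exact mul_le_mul_of_nonneg_right this hg0
    · have hg0 : g n ≤ 0 := mul_nonpos_of_nonpos_of_nonneg (by linarith) (by positivity)
      have hNge : n+1 ≤ N := by
        have : ((n+1 : ℕ):ℝ) < 1/u := by
          rw [lt_div_iff₀ hu]
          push_cast
          linarith
        have := Nat.lt_ceil.mpr this
        omega
      have : μ n ≤ W := by
        rw [hW, hμ]
        have := aux_mono hq0 hq1 (i := n+1) (j := N) (by omega) hNge
        push_cast at this ⊢
        convert this using 3 <;> push_cast <;> ring
      exact mul_le_mul_of_nonpos_right this hg0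
  -- summabilities
  have hsumμ : Summable (fun n => μ n * g n) := by
    have key := aux_sumb (fun n => μ n * (((n:ℝ)+1)*u - 1)) (C := (1+u)/(1-q)) 2
      (fun n => ?_) ht0.le ht1
    · exact key.congr fun n => by rw [hμ, hg]; ring
    · rw [abs_mul, abs_of_nonneg (hμ0 n)]
      have h1 : |((n:ℝ)+1)*u - 1| ≤ ((n:ℝ)+1)*(1+u) := by
        rw [abs_le]
        constructor
        · have : (0:ℝ) ≤ ((n:ℝ)+1)*u := by positivity
          nlinarith [show (1:ℝ) ≤ (n:ℝ)+1 by simp]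
        · nlinarith [show (1:ℝ) ≤ (n:ℝ)+1 by simp, hu.le]
      calc μ n * |((n:ℝ)+1)*u - 1| ≤ ((1/(1-q)) * ((n:ℝ)+1)) * (((n:ℝ)+1)*(1+u)) := by
            apply mul_le_mul (hμb n) h1 (abs_nonneg _)
            positivity
        _ = (1+u)/(1-q) * ((n:ℝ)+1)^2 := by ring
  have hsumW : Summable (fun n => W * g n) := by
    have key := aux_sumb (fun n => W * (((n:ℝ)+1)*u - 1)) (C := W*(1+u)) 1
      (fun n => ?_) ht0.le ht1
    · exact key.congr fun n => by rw [hg]; ring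
    · rw [abs_mul, abs_of_nonneg hW0.le]
      have h1 : |((n:ℝ)+1)*u - 1| ≤ ((n:ℝ)+1)*(1+u) := by
        rw [abs_le]
        constructor
        · have : (0:ℝ) ≤ ((n:ℝ)+1)*u := by positivity
          nlinarith [show (1:ℝ) ≤ (n:ℝ)+1 by simp]
        · nlinarith [show (1:ℝ) ≤ (n:ℝ)+1 by simp, hu.le]
      calc W * |((n:ℝ)+1)*u - 1| ≤ W * (((n:ℝ)+1)*(1+u)) :=
            mul_le_mul_of_nonneg_left h1 hW0.le
        _ = W*(1+u) * ((n:ℝ)+1)^1 := by ring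
  -- sum of g
  have hsg1 : Summable (fun n : ℕ => ((n:ℝ)+1) * t^(n+1)) :=
    (aux_sum1 1 ht0.le ht1).congr fun n => by ring
  have hsg0 : Summable (fun n : ℕ => t^(n+1)) :=
    (aux_sum1 0 ht0.le ht1).congr fun n => by ring
  have hsg : Summable g := by
    refine ((hsg1.mul_left u).sub hsg0).congr fun n => ?_
    rw [hg]; ring
  have hA : ∑' n : ℕ, ((n:ℝ)+1) * t^(n+1) = t/(1-t)^2 := by
    have hnorm : ‖t‖ < 1 := by rwa [Real.norm_eq_abs, abs_of_nonneg ht0.le]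
    have hs := hasSum_coe_mul_geometric_of_norm_lt_one (𝕜 := ℝ) hnorm
    have hsum : Summable (fun n : ℕ => (n:ℝ) * t^n) := hs.summable
    have h0 := hsum.tsum_eq_zero_add
    simp only [Nat.cast_zero, zero_mul, pow_zero, zero_add] at h0
    rw [hs.tsum_eq] at h0
    rw [h0]
    apply tsum_congr
    intro n
    push_cast
    ring
  have hB : ∑' n : ℕ, t^(n+1) = t * (1-t)⁻¹ := by
    have : ∀ n : ℕ, t^(n+1) = t * t^n := fun n => by rw [pow_succ]; ring
    rw [tsum_congr this, tsum_mul_left, tsum_geometric_of_lt_one ht0.le ht1]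
  have hgval : ∑' n, g n = u * (t/(1-t)^2) - t * (1-t)⁻¹ := by
    have : ∑' n, g n = ∑' n : ℕ, (u * (((n:ℝ)+1) * t^(n+1)) - t^(n+1)) := by
      apply tsum_congr; intro n; rw [hg]; ring
    rw [this, (hsg1.mul_left u).tsum_sub hsg0, tsum_mul_left, hA, hB]
  have hkey : 1 - t < u := by
    have := Real.add_one_lt_exp (x := -u) (by linarith)
    rw [← ht] at this
    linarith
  have hgpos : 0 < ∑' n, g n := by
    rw [hgval]
    have heq : u * (t/(1-t)^2) - t * (1-t)⁻¹ = (t*(u - (1-t)))/(1-t)^2 := by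
      field_simp
    rw [heq]
    apply div_pos (mul_pos ht0 (by linarith)) (by positivity)
  calc (0:ℝ) < W * ∑' n, g n := mul_pos hW0 hgpos
    _ = ∑' n, W * g n := (tsum_mul_left).symm
    _ ≤ ∑' n, μ n * g n := Summable.tsum_le_tsum hterm hsumW hsumμ

/-- For every `0 < q < 1`, the function `x ↦ x·ψ_q'(x)` is strictly decreasing on `(0,∞)`. -/
theorem mul_deriv_qDigamma_strictAntiOn (q : ℝ) (hq0 : 0 < q) (hq1 : q < 1) :
    StrictAntiOn (fun x : ℝ => x * deriv (qDigamma q) x) (Set.Ioi 0) := by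
  have hlog : Real.log q < 0 := Real.log_neg hq0 hq1
  have hq1' : (0:ℝ) < 1 - q := by linarith
  have hden : ∀ n : ℕ, (0:ℝ) < 1 - q^(n+1) := fun n => by
    have : q^(n+1) < 1 := pow_lt_one₀ hq0.le hq1 (by omega)
    linarith
  set b₁ : ℕ → ℝ := fun n => 1/(1 - q^(n+1)) with hb₁def
  set b₂ : ℕ → ℝ := fun n => b₁ n * (((n:ℝ)+1) * Real.log q) with hb₂def
  have hb₁pos : ∀ n, 0 < b₁ n := fun n => by
    simp only [hb₁def]
    exact div_pos one_pos (hden n)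
  have hb₁le : ∀ n, b₁ n ≤ 1/(1-q) := by
    intro n
    simp only [hb₁def]
    have h1 : 1 - q ≤ 1 - q^(n+1) := by
      have : q^(n+1) ≤ q := by
        calc q^(n+1) ≤ q^1 := pow_le_pow_of_le_one hq0.le hq1.le (by omega)
          _ = q := pow_one q
      linarith
    rw [div_le_div_iff₀ (hden n) hq1']
    nlinarith [hden n]
  have hb₁ : ∀ n, |b₁ n| ≤ (1/(1-q)) * ((n:ℝ)+1)^0 := fun n => by
    rw [abs_of_pos (hb₁pos n), pow_zero, mul_one]; exact hb₁le n
  have hb₂ : ∀ n, |b₂ n| ≤ ((1/(1-q)) * |Real.log q|) * ((n:ℝ)+1)^1 := by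
    intro n
    simp only [hb₂def]
    rw [abs_mul, abs_mul, abs_of_pos (hb₁pos n),
      abs_of_nonneg (show (0:ℝ) ≤ (n:ℝ)+1 by positivity), pow_one]
    calc b₁ n * (((n:ℝ)+1) * |Real.log q|)
        ≤ (1/(1-q)) * (((n:ℝ)+1) * |Real.log q|) := by
          apply mul_le_mul_of_nonneg_right (hb₁le n)
          positivity
      _ = (1/(1-q)) * |Real.log q| * ((n:ℝ)+1) := by ring
  -- rewrite qDigamma
  have hqd : qDigamma q = fun y => -Real.log (1-q) +
      Real.log q * ∑' n : ℕ, b₁ n * Real.exp ((((n:ℝ)+1) * Real.log q) * y) := by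
    funext y
    rw [qDigamma, if_pos hq1]
    congr 2
    apply tsum_congr
    intro n
    have e1 : q ^ (((n:ℝ)+1)*y) = Real.exp ((((n:ℝ)+1) * Real.log q) * y) := by
      rw [Real.rpow_def_of_pos hq0]
      congr 1
      ring
    have e2 : q ^ ((n:ℝ)+1) = q^(n+1:ℕ) := by
      rw [show ((n:ℝ)+1) = ((n+1:ℕ):ℝ) by push_cast; ring, Real.rpow_natCast]
    rw [e1, e2]
    simp only [hb₁def]
    rw [div_eq_mul_inv, one_div, mul_comm]
  set P : ℝ → ℝ := fun y =>
    Real.log q * ∑' n : ℕ, b₂ n * Real.exp ((((n:ℝ)+1) * Real.log q) * y) with hPdef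
  have hD1 : ∀ x : ℝ, 0 < x → HasDerivAt (qDigamma q) (P x) x := by
    intro x hx
    rw [hqd]
    have h := aux_deriv hq0 hq1 b₁ 0 hb₁ hx
    have h2 := (h.const_mul (Real.log q)).const_add (-Real.log (1-q))
    exact h2
  have hD2 : ∀ x : ℝ, 0 < x → HasDerivAt P
      (Real.log q * ∑' n : ℕ, (b₂ n * (((n:ℝ)+1) * Real.log q)) *
        Real.exp ((((n:ℝ)+1) * Real.log q) * x)) x := by
    intro x hx
    exact (aux_deriv hq0 hq1 b₂ 1 hb₂ hx).const_mul (Real.log q)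
  set G : ℝ → ℝ := fun y => y * P y with hGdef
  have hGd : ∀ x : ℝ, 0 < x → HasDerivAt G
      (1 * P x + x * (Real.log q * ∑' n : ℕ, (b₂ n * (((n:ℝ)+1) * Real.log q)) *
        Real.exp ((((n:ℝ)+1) * Real.log q) * x))) x := by
    intro x hx
    exact (hasDerivAt_id x).mul (hD2 x hx)
  -- negativity of the derivative
  have hneg : ∀ x : ℝ, 0 < x →
      1 * P x + x * (Real.log q * ∑' n : ℕ, (b₂ n * (((n:ℝ)+1) * Real.log q)) *
        Real.exp ((((n:ℝ)+1) * Real.log q) * x)) < 0 := by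
    intro x hx
    set u : ℝ := -(Real.log q * x) with hudef
    have hu : 0 < u := by
      simp only [hudef]
      nlinarith
    have hexp : ∀ n : ℕ, Real.exp ((((n:ℝ)+1) * Real.log q) * x)
        = (Real.exp (-u))^(n+1) := by
      intro n
      rw [aux_expL q n x]
      congr 2
      simp [hudef]
    have hs0 : (0:ℝ) ≤ Real.exp (-u) := (Real.exp_pos _).le
    have hs1 : Real.exp (-u) < 1 := Real.exp_lt_one_iff.mpr (by linarith)
    have hA : Summable (fun n : ℕ => Real.log q *
        (b₂ n * Real.exp ((((n:ℝ)+1) * Real.log q) * x))) := by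
      have key := aux_sumb (fun n => Real.log q * b₂ n)
        (C := |Real.log q| * ((1/(1-q)) * |Real.log q|)) 1
        (fun n => by
          rw [abs_mul]
          calc |Real.log q| * |b₂ n|
              ≤ |Real.log q| * (((1/(1-q)) * |Real.log q|) * ((n:ℝ)+1)^1) :=
                mul_le_mul_of_nonneg_left (hb₂ n) (abs_nonneg _)
            _ = |Real.log q| * ((1/(1-q)) * |Real.log q|) * ((n:ℝ)+1)^1 := by ring)
        hs0 hs1
      refine key.congr fun n => ?_
      rw [hexp n]
      ring
    have hB : Summable (fun n : ℕ => (x * Real.log q) *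
        ((b₂ n * (((n:ℝ)+1) * Real.log q)) *
          Real.exp ((((n:ℝ)+1) * Real.log q) * x))) := by
      have key := aux_sumb (fun n => (x * Real.log q) * (b₂ n * (((n:ℝ)+1) * Real.log q)))
        (C := (|x| * |Real.log q|) * (((1/(1-q)) * |Real.log q|) * |Real.log q|)) 2
        (fun n => by
          simp only [abs_mul]
          have h1 : |b₂ n| * (|((n:ℝ)+1)| * |Real.log q|)
              ≤ (((1/(1-q)) * |Real.log q|) * ((n:ℝ)+1)^1) * (((n:ℝ)+1) * |Real.log q|) := by
            rw [abs_of_nonneg (show (0:ℝ) ≤ (n:ℝ)+1 by positivity)]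
            apply mul_le_mul_of_nonneg_right (hb₂ n)
            positivity
          calc |x| * |Real.log q| * (|b₂ n| * (|((n:ℝ)+1)| * |Real.log q|))
              ≤ |x| * |Real.log q| * ((((1/(1-q)) * |Real.log q|) * ((n:ℝ)+1)^1) *
                (((n:ℝ)+1) * |Real.log q|)) :=
                mul_le_mul_of_nonneg_left h1 (by positivity)
            _ = (|x| * |Real.log q|) * (((1/(1-q)) * |Real.log q|) * |Real.log q|) *
                ((n:ℝ)+1)^2 := by ring)
        hs0 hs1
      refine key.congr fun n => ?_
      rw [hexp n]
      ring
    have e1 : 1 * P x = ∑' n : ℕ, Real.log q *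
        (b₂ n * Real.exp ((((n:ℝ)+1) * Real.log q) * x)) := by
      rw [one_mul, hPdef]
      exact (tsum_mul_left).symm
    have e2 : x * (Real.log q * ∑' n : ℕ, (b₂ n * (((n:ℝ)+1) * Real.log q)) *
        Real.exp ((((n:ℝ)+1) * Real.log q) * x))
        = ∑' n : ℕ, (x * Real.log q) * ((b₂ n * (((n:ℝ)+1) * Real.log q)) *
          Real.exp ((((n:ℝ)+1) * Real.log q) * x)) := by
      rw [← mul_assoc]
      exact (tsum_mul_left).symm
    rw [e1, e2, ← hA.tsum_add hB]
    have e3 : ∀ n : ℕ, Real.log q * (b₂ n * Real.exp ((((n:ℝ)+1) * Real.log q) * x))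
        + (x * Real.log q) * ((b₂ n * (((n:ℝ)+1) * Real.log q)) *
          Real.exp ((((n:ℝ)+1) * Real.log q) * x))
        = (-(Real.log q)^2) * ((((n:ℝ)+1)/(1 - q^(n+1))) *
            ((((n:ℝ)+1)*u - 1) * (Real.exp (-u))^(n+1))) := by
      intro n
      rw [hexp n]
      simp only [hb₂def, hb₁def, hudef]
      ring
    rw [tsum_congr e3, tsum_mul_left]
    have hK := aux_pos hq0 hq1 hu
    have hlqne : Real.log q ≠ 0 := ne_of_lt hlog
    have hlq2 : 0 < (Real.log q)^2 := by positivity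
    nlinarith
  have hanti : StrictAntiOn G (Set.Ioi 0) := by
    apply strictAntiOn_of_deriv_neg (convex_Ioi 0)
    · intro x hx
      exact ((hGd x hx).continuousAt).continuousWithinAt
    · intro x hx
      rw [interior_Ioi] at hx
      rw [(hGd x hx).deriv]
      exact hneg x hx
  intro a ha b hb hab
  have ea : a * deriv (qDigamma q) a = G a := by
    simp only [hGdef]
    rw [(hD1 a ha).deriv]
  have eb : b * deriv (qDigamma q) b = G b := by
    simp only [hGdef]
    rw [(hD1 b hb).deriv]
  simp only []
  rw [ea, eb]
  exact hanti ha hb hab
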